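/- Let X = ({0} × [0,1]) ∪ ([0,1] × {0}) ⊂ ℝ², equipped with the metric obtained by restricting the ℓ_∞ norm of ℝ². Then neither the uncentered blossom Blu((1,0), 1, 1/6) nor the blossom Bl((1,0), 1, 1/6) is an open ball of X: for every x ∈ X and every r > 0, B(x,r) ≠ Blu((1,0), 1, 1/6) and B(x,r) ≠ Bl((1,0), 1, 1/6). -/
import Mathlib


open Metric

/-- The `s`-blossom of a set `S`: `Bl(S,s) = ⋃_{x ∈ S} B(x,s)`. -/
def Bl {X : Type*} [PseudoMetricSpace X] (S : Set X) (s : ℝ) : Set X :=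
  ⋃ x ∈ S, ball x s

/-- The uncentered `s`-blossom of a set `S`. -/
def Blu {X : Type*} [PseudoMetricSpace X] (S : Set X) (s : ℝ) : Set X :=
  ⋃ x ∈ S, ⋃ y ∈ {y : X | x ∈ ball y s}, ball y s

/-- The cross `({0} × [0,1]) ∪ ([0,1] × {0}) ⊆ ℝ²`, where `ℝ² = ℝ × ℝ` carries
the `ℓ_∞` (sup) metric `d(u,v) = max(|u₁ − v₁|, |u₂ − v₂|)`, which is the
product metric of `ℝ × ℝ`. -/
abbrev Cross : Type :=
  {p : ℝ × ℝ // p ∈ ({0} ×ˢ Set.Icc (0:ℝ) 1) ∪ (Set.Icc (0:ℝ) 1 ×ˢ {0})}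

/-- The point `(1,0)` of the cross. -/
def crossPt : Cross :=
  ⟨(1, 0), Or.inr (Set.mk_mem_prod (by norm_num) rfl)⟩

lemma dist_cross (p q : Cross) :
    dist p q = max |p.1.1 - q.1.1| |p.1.2 - q.1.2| := by
  rw [Subtype.dist_eq, Prod.dist_eq]
  simp [Real.dist_eq]

noncomputable def hpt (a : ℝ) (h : a ∈ Set.Icc (0:ℝ) 1) : Cross :=
  ⟨(a, 0), Or.inr (Set.mk_mem_prod h rfl)⟩

noncomputable def vpt (b : ℝ) (h : b ∈ Set.Icc (0:ℝ) 1) : Cross :=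
  ⟨(0, b), Or.inl (Set.mk_mem_prod rfl h)⟩

lemma mem_Bl_iff {z : Cross} {S : Set Cross} {s : ℝ} :
    z ∈ Bl S s ↔ ∃ w, w ∈ S ∧ dist z w < s := by
  constructor
  · intro h
    rcases Set.mem_iUnion₂.1 h with ⟨w, hw, hz⟩
    exact ⟨w, hw, mem_ball.1 hz⟩
  · rintro ⟨w, hw, hz⟩
    exact Set.mem_iUnion₂.2 ⟨w, hw, mem_ball.2 hz⟩

lemma mem_Blu_iff {z : Cross} {S : Set Cross} {s : ℝ} :
    z ∈ Blu S s ↔ ∃ w, w ∈ S ∧ ∃ y, dist w y < s ∧ dist z y < s := by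
  constructor
  · intro h
    rcases Set.mem_iUnion₂.1 h with ⟨w, hw, h2⟩
    rcases Set.mem_iUnion₂.1 h2 with ⟨y, hy, hz⟩
    exact ⟨w, hw, y, mem_ball.1 hy, mem_ball.1 hz⟩
  · rintro ⟨w, hw, y, hwy, hz⟩
    exact Set.mem_iUnion₂.2 ⟨w, hw, Set.mem_iUnion₂.2 ⟨y, mem_ball.2 hwy, mem_ball.2 hz⟩⟩

lemma cross_cases (p : Cross) :
    (p.1.1 = 0 ∧ 0 ≤ p.1.2 ∧ p.1.2 ≤ 1) ∨ (0 ≤ p.1.1 ∧ p.1.1 ≤ 1 ∧ p.1.2 = 0) := by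
  rcases p.2 with h | h
  · exact Or.inl ⟨h.1, h.2.1, h.2.2⟩
  · exact Or.inr ⟨h.1.1, h.1.2, h.2⟩

lemma p1_mem_Bl : crossPt ∈ Bl (ball crossPt 1) (1/6) := by
  rw [mem_Bl_iff]
  exact ⟨crossPt, by simp, by simp⟩

lemma p1_mem_Blu : crossPt ∈ Blu (ball crossPt 1) (1/6) := by
  rw [mem_Blu_iff]
  exact ⟨crossPt, by simp, crossPt, by simp, by simp⟩

noncomputable def w12 : Cross := hpt (1/12) (by norm_num)

noncomputable def p0 : Cross := hpt 0 (by norm_num)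

lemma dist_w12_crossPt : dist w12 crossPt < 1 := by
  rw [dist_cross]
  show max |1/12 - 1| |0 - 0| < 1
  rw [max_lt_iff, abs_sub_lt_iff, abs_sub_lt_iff] ; norm_num

lemma dist_p0_w12 : dist p0 w12 < 1/6 := by
  rw [dist_cross]
  show max |0 - 1/12| |0 - 0| < 1/6
  rw [max_lt_iff, abs_sub_lt_iff, abs_sub_lt_iff] ; norm_num

lemma p0_mem_Bl : p0 ∈ Bl (ball crossPt 1) (1/6) :=
  mem_Bl_iff.2 ⟨w12, mem_ball.2 dist_w12_crossPt, dist_p0_w12⟩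

lemma p0_mem_Blu : p0 ∈ Blu (ball crossPt 1) (1/6) :=
  mem_Blu_iff.2 ⟨w12, mem_ball.2 dist_w12_crossPt, w12, by simp, dist_p0_w12⟩

/-- Any point of the ball `B((1,0),1)` is horizontal with positive abscissa. -/
lemma ball_crossPt_struct {w : Cross} (hw : w ∈ ball crossPt 1) :
    0 < w.1.1 ∧ w.1.1 ≤ 1 ∧ w.1.2 = 0 := by
  rw [mem_ball, dist_cross] at hw
  have hw1 : |w.1.1 - 1| < 1 := lt_of_le_of_lt (le_max_left _ _) hw
  rcases cross_cases w with ⟨h1, h2, h3⟩ | ⟨h1, h2, h3⟩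
  · rw [h1] at hw1
    rw [abs_sub_lt_iff] at hw1
    norm_num at hw1
  · rw [abs_sub_lt_iff] at hw1
    exact ⟨by linarith [hw1.2], h2, h3⟩

lemma vpt_not_mem_Bl {t : ℝ} (ht : t ∈ Set.Icc (0:ℝ) 1) (h6 : 1/6 ≤ t) :
    vpt t ht ∉ Bl (ball crossPt 1) (1/6) := by
  rw [mem_Bl_iff]
  rintro ⟨w, hw, hd⟩
  obtain ⟨hw1, hw2, hw3⟩ := ball_crossPt_struct hw
  rw [dist_cross] at hd
  have : |t - w.1.2| < 1/6 := lt_of_le_of_lt (le_max_right _ _) hd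
  rw [hw3, sub_zero, abs_of_nonneg ht.1] at this
  linarith

lemma vpt_not_mem_Blu {t : ℝ} (ht : t ∈ Set.Icc (0:ℝ) 1) (h3 : 1/3 ≤ t) :
    vpt t ht ∉ Blu (ball crossPt 1) (1/6) := by
  rw [mem_Blu_iff]
  rintro ⟨w, hw, y, hwy, hd⟩
  obtain ⟨hw1, hw2, hw3⟩ := ball_crossPt_struct hw
  rw [dist_cross] at hwy hd
  rcases cross_cases y with ⟨k1, k2, k3⟩ | ⟨k1, k2, k3⟩
  · have hA : |w.1.2 - y.1.2| < 1/6 := lt_of_le_of_lt (le_max_right _ _) hwy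
    have hB : |t - y.1.2| < 1/6 := lt_of_le_of_lt (le_max_right _ _) hd
    rw [hw3] at hA
    rw [abs_sub_lt_iff] at hA hB
    linarith [hB.1, hA.2]
  · have hB : |t - y.1.2| < 1/6 := lt_of_le_of_lt (le_max_right _ _) hd
    rw [k3, sub_zero, abs_of_nonneg ht.1] at hB
    linarith


/-- In the cross `X = ({0} × [0,1]) ∪ ([0,1] × {0})` with the restricted
`ℓ_∞` metric, neither `Blu((1,0), 1, 1/6)` nor `Bl((1,0), 1, 1/6)` is an open
ball of `X`. -/
theorem cross_blossoms_not_balls :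
    ∀ (x : Cross) (r : ℝ), 0 < r →
      ball x r ≠ Blu (ball crossPt 1) (1 / 6) ∧
      ball x r ≠ Bl (ball crossPt 1) (1 / 6) := by
  intro x r hr
  have hhalf : (1/2 : ℝ) ∈ Set.Icc (0:ℝ) 1 := by norm_num
  have hsixth : (1/6 : ℝ) ∈ Set.Icc (0:ℝ) 1 := by norm_num
  have hthird : (1/3 : ℝ) ∈ Set.Icc (0:ℝ) 1 := by norm_num
  -- common analysis: given the 3 point-facts, derive False
  have key : ∀ s : ℝ, s ≤ 1/3 →
      dist crossPt x < r → dist p0 x < r →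
      (∀ (t : ℝ) (ht : t ∈ Set.Icc (0:ℝ) 1), s ≤ t → ¬ dist (vpt t ht) x < r) → False := by
    intro s hs h1 h0 hv
    rcases cross_cases x with ⟨k1, k2, k3⟩ | ⟨k1, k2, k3⟩
    · -- x vertical (0,b), b ∈ [0,1]
      -- dist crossPt x = max |1-0| |0-b| ≥ 1, so r > 1
      have hr1 : (1:ℝ) < r := by
        rw [dist_cross] at h1
        have : max |(crossPt : Cross).1.1 - x.1.1| |(crossPt:Cross).1.2 - x.1.2|
            = max |1 - x.1.1| |0 - x.1.2| := rfl
        rw [this, k1] at h1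
        calc (1:ℝ) = |1 - 0| := by norm_num
        _ ≤ max |1 - (0:ℝ)| |0 - x.1.2| := le_max_left _ _
        _ < r := h1
      -- then (0, 1/2) is in the ball
      apply hv (1/2) hhalf (by linarith)
      rw [dist_cross]
      show max |0 - x.1.1| |1/2 - x.1.2| < r
      rw [k1]
      apply max_lt
      · rw [abs_sub_lt_iff]; constructor <;> linarith
      · rw [abs_sub_lt_iff]; constructor <;> linarith
    · -- x horizontal (a,0), a ∈ [0,1]
      have ha : |0 - x.1.1| < r := by
        rw [dist_cross] at h0
        have e : max |(p0 : Cross).1.1 - x.1.1| |(p0:Cross).1.2 - x.1.2|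
            = max |0 - x.1.1| |0 - x.1.2| := rfl
        rw [e] at h0
        exact lt_of_le_of_lt (le_max_left _ _) h0
      have h1a : |1 - x.1.1| < r := by
        rw [dist_cross] at h1
        have e : max |(crossPt : Cross).1.1 - x.1.1| |(crossPt:Cross).1.2 - x.1.2|
            = max |1 - x.1.1| |0 - x.1.2| := rfl
        rw [e] at h1
        exact lt_of_le_of_lt (le_max_left _ _) h1
      have hss : (0:ℝ) ≤ s ∧ s ≤ 1 := by
        constructor
        · by_contra hneg
          push_neg at hneg
          exact hv 0 (by norm_num) (by linarith) (by
            rw [dist_cross]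
            show max |0 - x.1.1| |0 - x.1.2| < r
            rw [k3]
            exact max_lt ha (by simpa using hr))
        · linarith
      -- (0, s) not in ball : r ≤ max |0 - a| |s - 0| = max a s
      have hvs := hv s ⟨hss.1, hss.2⟩ le_rfl
      rw [dist_cross] at hvs
      have e : max |(vpt s ⟨hss.1, hss.2⟩ : Cross).1.1 - x.1.1|
          |(vpt s ⟨hss.1, hss.2⟩ : Cross).1.2 - x.1.2|
          = max |0 - x.1.1| |s - x.1.2| := rfl
      rw [e, k3] at hvs
      push_neg at hvs
      have hsr : r ≤ max |0 - x.1.1| |s - 0| := hvs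
      -- either r ≤ |0-a| < r  (contradiction) or r ≤ |s-0| = s
      rcases le_max_iff.1 hsr with h | h
      · linarith
      · rw [sub_zero, abs_of_nonneg hss.1] at h
        -- r ≤ s ≤ 1/3 ; a < r and 1 - a < r impossible? need r ≤ 1/3... a < 1/3 and 1-a<1/3 ⇒ 1 < 2/3
        rw [abs_sub_lt_iff] at ha h1a
        have h2 : x.1.1 < r := by linarith [ha.2]
        have h3 : 1 - x.1.1 < r := by linarith [h1a.1]
        linarith
  constructor
  · intro heq
    apply key (1/3) le_rfl
    · have := p1_mem_Blu; rw [← heq, mem_ball] at this; exact this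
    · have := p0_mem_Blu; rw [← heq, mem_ball] at this; exact this
    · intro t ht hts hd
      exact vpt_not_mem_Blu ht hts (by rw [← heq, mem_ball]; exact hd)
  · intro heq
    apply key (1/6) (by norm_num)
    · have := p1_mem_Bl; rw [← heq, mem_ball] at this; exact this
    · have := p0_mem_Bl; rw [← heq, mem_ball] at this; exact this
    · intro t ht hts hd
      exact vpt_not_mem_Bl ht hts (by rw [← heq, mem_ball]; exact hd)
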